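/- For every integer κ ≥ 1, ∑_{i=1}^κ ( ∑_{j=i}^κ 1/j )² = 2κ − H_κ, where H_κ = ∑_{i=1}^κ 1/i is the κ-th harmonic number. -/

import Mathlib

open Finset

lemma sum_tail_eq (κ : ℕ) : ∑ i ∈ Icc 1 κ, ∑ j ∈ Icc i κ, (1:ℝ)/j = κ := by
  induction κ with
  | zero => simp
  | succ n ih =>
    rw [Finset.sum_Icc_succ_top (by omega)]
    have h1 : ∀ i ∈ Icc 1 n, ∑ j ∈ Icc i (n+1), (1:ℝ)/j
        = (∑ j ∈ Icc i n, (1:ℝ)/j) + 1/(n+1 : ℕ) := by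
      intro i hi
      rw [mem_Icc] at hi
      exact Finset.sum_Icc_succ_top (by omega) _
    rw [Finset.sum_congr rfl h1, Finset.sum_add_distrib, ih, Finset.sum_const,
      Nat.card_Icc, Icc_self, Finset.sum_singleton]
    have hn : ((n:ℝ)+1) ≠ 0 := by positivity
    push_cast [nsmul_eq_mul]
    field_simp
    ring

/-- `∑_{i=1}^κ (∑_{j=i}^κ 1/j)² = 2κ − H_κ`. -/
theorem sum_sq_tail_harmonic (κ : ℕ) (hκ : 1 ≤ κ) :
    ∑ i ∈ Icc 1 κ, (∑ j ∈ Icc i κ, (1 : ℝ) / j) ^ 2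
      = 2 * κ - ∑ i ∈ Icc 1 κ, (1 : ℝ) / i := by
  clear hκ
  induction κ with
  | zero => simp
  | succ n ih =>
    have hn : ((n:ℝ)+1) ≠ 0 := by positivity
    rw [Finset.sum_Icc_succ_top (a := 1) (by omega)]
    have h1 : ∀ i ∈ Icc 1 n, (∑ j ∈ Icc i (n+1), (1:ℝ)/j)^2
        = (∑ j ∈ Icc i n, (1:ℝ)/j)^2 + 2*(1/(n+1:ℕ))*(∑ j ∈ Icc i n, (1:ℝ)/j)
          + (1/(n+1:ℕ))^2 := by
      intro i hi
      rw [mem_Icc] at hi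
      rw [Finset.sum_Icc_succ_top (by omega)]
      ring
    rw [Finset.sum_congr rfl h1]
    simp only [Finset.sum_add_distrib, Finset.sum_const, ← Finset.mul_sum]
    rw [ih, sum_tail_eq, Nat.card_Icc, Icc_self, Finset.sum_singleton,
      Finset.sum_Icc_succ_top (a := 1) (by omega)]
    push_cast [nsmul_eq_mul]
    field_simp
    ring
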